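/- Let P be a simple restricted module over the N=1 Ramond algebra R. Then for any nonzero v ∈ P and any sufficiently large r, P is a locally nilpotent module over the subalgebra R^{(r)} = ⊕_{m>r} ℂL_m ⊕ ⊕_{m>r-1} ℂG_m; i.e., for every w ∈ P there exists n such that (R^{(r)})^n w = 0. -/

import Mathlib

/-- A module over the N=1 Ramond algebra with central charge `c`: a ℤ₂-graded complex
vector space with operators L_m, G_m (m ∈ ℤ) satisfying
[L_m,L_n] = (n-m)L_{m+n} + ((n³-n)/12)δ_{m+n,0}·c,
[G_m,G_n] = -2L_{m+n} + ((4m²-1)/12)δ_{m+n,0}·c,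
[L_m,G_n] = (n-m/2)G_{m+n}, with C acting as the scalar c. -/
structure RamondRep (P : Type*) [AddCommGroup P] [Module ℂ P] where
  L : ℤ → P →ₗ[ℂ] P
  G : ℤ → P →ₗ[ℂ] P
  c : ℂ
  ev : Submodule ℂ P
  od : Submodule ℂ P
  hcompl : IsCompl ev od
  hLev : ∀ m : ℤ, ∀ v ∈ ev, L m v ∈ ev
  hLod : ∀ m : ℤ, ∀ v ∈ od, L m v ∈ od
  hGev : ∀ m : ℤ, ∀ v ∈ ev, G m v ∈ od
  hGod : ∀ m : ℤ, ∀ v ∈ od, G m v ∈ ev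
  hLL : ∀ m n : ℤ, ∀ v : P,
    L m (L n v) - L n (L m v) = ((n : ℂ) - (m : ℂ)) • L (m + n) v
      + (((n : ℂ) ^ 3 - (n : ℂ)) / 12 * (if m + n = 0 then c else 0)) • v
  hGG : ∀ m n : ℤ, ∀ v : P,
    G m (G n v) + G n (G m v) = (-2 : ℂ) • L (m + n) v
      + ((4 * (m : ℂ) ^ 2 - 1) / 12 * (if m + n = 0 then c else 0)) • v
  hLG : ∀ m n : ℤ, ∀ v : P,
    L m (G n v) - G n (L m v) = ((n : ℂ) - (m : ℂ) / 2) • G (m + n) v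

variable {P : Type*} [AddCommGroup P] [Module ℂ P]

/-- A subspace invariant under the whole Ramond action. -/
def RamondRep.Invariant (ρ : RamondRep P) (W : Submodule ℂ P) : Prop :=
  (∀ m : ℤ, ∀ v ∈ W, ρ.L m v ∈ W) ∧ (∀ m : ℤ, ∀ v ∈ W, ρ.G m v ∈ W)

/-- A ℤ₂-graded subspace. -/
def RamondRep.Graded (ρ : RamondRep P) (W : Submodule ℂ P) : Prop :=
  W = W ⊓ ρ.ev ⊔ W ⊓ ρ.od

/-- Simplicity: P is nonzero and has no proper nonzero graded submodules. -/
def RamondRep.IsSimple (ρ : RamondRep P) : Prop :=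
  (∃ v : P, v ≠ 0) ∧
    ∀ W : Submodule ℂ P, ρ.Invariant W → ρ.Graded W → W = ⊥ ∨ W = ⊤

/-- Restrictedness: every vector is annihilated by all L_m, G_m with m large. -/
def RamondRep.IsRestricted (ρ : RamondRep P) : Prop :=
  ∀ v : P, ∃ k : ℤ, ∀ m : ℤ, k < m → ρ.L m v = 0 ∧ ρ.G m v = 0

namespace RamondAux

def opOf (ρ : RamondRep P) (d : Bool × ℤ) : P →ₗ[ℂ] P :=
  if d.1 then ρ.L d.2 else ρ.G d.2

lemma comm (ρ : RamondRep P) (d e : Bool × ℤ) :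
    ∃ ε a b : ℂ, (d.2 + e.2 ≠ 0 → b = 0) ∧ ∀ x : P,
      opOf ρ d (opOf ρ e x) = ε • opOf ρ e (opOf ρ d x)
        + a • opOf ρ ((d.1 == e.1), d.2 + e.2) x + b • x := by
  obtain ⟨db, m⟩ := d; obtain ⟨eb, p⟩ := e
  cases db <;> cases eb
  · -- G G
    refine ⟨-1, -2, (4 * (m : ℂ) ^ 2 - 1) / 12 * (if m + p = 0 then ρ.c else 0),
      fun h => by simp [h], fun x => ?_⟩
    show ρ.G m (ρ.G p x) = (-1 : ℂ) • ρ.G p (ρ.G m x) + (-2 : ℂ) • ρ.L (m + p) x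
      + ((4 * (m : ℂ) ^ 2 - 1) / 12 * (if m + p = 0 then ρ.c else 0)) • x
    linear_combination (norm := module) ρ.hGG m p x
  · -- G L
    refine ⟨1, -((m : ℂ) - (p : ℂ)/2), 0, fun _ => rfl, fun x => ?_⟩
    show ρ.G m (ρ.L p x) = (1 : ℂ) • ρ.L p (ρ.G m x)
      + (-((m : ℂ) - (p : ℂ)/2)) • ρ.G (m + p) x + (0 : ℂ) • x
    rw [add_comm m p]
    linear_combination (norm := module) - ρ.hLG p m x
  · -- L G
    refine ⟨1, (p : ℂ) - (m : ℂ)/2, 0, fun _ => rfl, fun x => ?_⟩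
    show ρ.L m (ρ.G p x) = (1 : ℂ) • ρ.G p (ρ.L m x)
      + ((p : ℂ) - (m : ℂ)/2) • ρ.G (m + p) x + (0 : ℂ) • x
    linear_combination (norm := module) ρ.hLG m p x
  · -- L L
    refine ⟨1, (p : ℂ) - (m : ℂ), ((p : ℂ) ^ 3 - (p : ℂ)) / 12 * (if m + p = 0 then ρ.c else 0),
      fun h => by simp [h], fun x => ?_⟩
    show ρ.L m (ρ.L p x) = (1 : ℂ) • ρ.L p (ρ.L m x) + ((p : ℂ) - (m : ℂ)) • ρ.L (m + p) x
      + (((p : ℂ) ^ 3 - (p : ℂ)) / 12 * (if m + p = 0 then ρ.c else 0)) • x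
    linear_combination (norm := module) ρ.hLL m p x

def act (ρ : RamondRep P) (u : List (Bool × ℤ)) (w : P) : P :=
  u.foldr (fun d x => opOf ρ d x) w

@[simp] lemma act_nil (ρ : RamondRep P) (w : P) : act ρ [] w = w := rfl

@[simp] lemma act_cons (ρ : RamondRep P) (d : Bool × ℤ) (u : List (Bool × ℤ)) (w : P) :
    act ρ (d :: u) w = opOf ρ d (act ρ u w) := rfl

lemma act_append (ρ : RamondRep P) (u₁ u₂ : List (Bool × ℤ)) (w : P) :
    act ρ (u₁ ++ u₂) w = act ρ u₁ (act ρ u₂ w) := by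
  induction u₁ with
  | nil => rfl
  | cons d u ih => simp [ih]

@[simp] lemma act_zero (ρ : RamondRep P) (u : List (Bool × ℤ)) : act ρ u 0 = 0 := by
  induction u with
  | nil => rfl
  | cons d u ih => simp [ih]

lemma act_add (ρ : RamondRep P) (u : List (Bool × ℤ)) (x y : P) :
    act ρ u (x + y) = act ρ u x + act ρ u y := by
  induction u with
  | nil => rfl
  | cons d u ih => simp [ih]

lemma act_smul (ρ : RamondRep P) (u : List (Bool × ℤ)) (c : ℂ) (x : P) :
    act ρ u (c • x) = c • act ρ u x := by
  induction u with
  | nil => rfl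
  | cons d u ih => simp [ih]

lemma claimA (ρ : RamondRep P) (v : P) (k : ℤ) (hk : 0 ≤ k)
    (hv : ∀ m : ℤ, k < m → ρ.L m v = 0 ∧ ρ.G m v = 0) :
    ∀ s : ℕ, ∀ u : List (Bool × ℤ), u.length = s →
      (s : ℤ) * k < (u.map Prod.snd).sum → act ρ u v = 0 := by
  intro s
  induction s using Nat.strong_induction_on with
  | _ s IH =>
  have move : ∀ u₂ u₁ : List (Bool × ℤ), ∀ d : Bool × ℤ,
      k < d.2 → (u₁ ++ d :: u₂).length = s →
      (s : ℤ) * k < ((u₁ ++ d :: u₂).map Prod.snd).sum →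
      act ρ (u₁ ++ d :: u₂) v = 0 := by
    intro u₂
    induction u₂ with
    | nil =>
      intro u₁ d hd _ _
      have h0 : opOf ρ d v = 0 := by
        rcases hv d.2 hd with ⟨h1, h2⟩
        cases hb : d.1
        · simpa [opOf, hb] using h2
        · simpa [opOf, hb] using h1
      rw [act_append, act_cons, act_nil, h0, act_zero]
    | cons e u₂' ih =>
      intro u₁ d hd hlen hsum
      obtain ⟨ε, a, b, hb, hc⟩ := comm ρ d e
      have key : act ρ (u₁ ++ d :: e :: u₂') v
          = ε • act ρ (u₁ ++ e :: d :: u₂') v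
            + a • act ρ (u₁ ++ ((d.1 == e.1), d.2 + e.2) :: u₂') v
            + b • act ρ (u₁ ++ u₂') v := by
        rw [act_append, act_append, act_append, act_append, act_cons, act_cons,
          act_cons, act_cons, act_cons, hc (act ρ u₂' v), act_add, act_add,
          act_smul, act_smul, act_smul]
      rw [key]
      have h1 : act ρ (u₁ ++ e :: d :: u₂') v = 0 := by
        have := ih (u₁ ++ [e]) d hd (by simp only [List.length_append, List.length_cons, List.length_nil] at hlen ⊢; omega)
        rw [show (u₁ ++ [e]) ++ d :: u₂' = u₁ ++ e :: d :: u₂' by simp] at this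
        apply this
        calc (s : ℤ) * k < ((u₁ ++ d :: e :: u₂').map Prod.snd).sum := hsum
          _ = ((u₁ ++ e :: d :: u₂').map Prod.snd).sum := by
            simp [List.sum_append]; ring
      have h2 : act ρ (u₁ ++ ((d.1 == e.1), d.2 + e.2) :: u₂') v = 0 := by
        have hlt : (u₁ ++ ((d.1 == e.1), d.2 + e.2) :: u₂').length < s := by
          simp only [List.length_append, List.length_cons, List.length_nil] at hlen ⊢; omega
        apply IH _ hlt _ rfl
        have hsum2 : (((u₁ ++ ((d.1 == e.1), d.2 + e.2) :: u₂')).map Prod.snd).sum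
            = ((u₁ ++ d :: e :: u₂').map Prod.snd).sum := by
          simp [List.sum_append]; ring
        rw [hsum2]
        refine lt_of_le_of_lt ?_ hsum
        apply mul_le_mul_of_nonneg_right _ hk
        exact_mod_cast Nat.le_of_lt hlt
      have h3 : b • act ρ (u₁ ++ u₂') v = 0 := by
        rcases eq_or_ne (d.2 + e.2) 0 with h0 | h0
        · have hlt : (u₁ ++ u₂').length < s := by
            simp only [List.length_append, List.length_cons, List.length_nil] at hlen ⊢; omega
          have : act ρ (u₁ ++ u₂') v = 0 := by
            apply IH _ hlt _ rfl
            have hsum3 : (((u₁ ++ u₂')).map Prod.snd).sum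
                = ((u₁ ++ d :: e :: u₂').map Prod.snd).sum := by
              simp [List.sum_append]; omega
            rw [hsum3]
            refine lt_of_le_of_lt ?_ hsum
            apply mul_le_mul_of_nonneg_right _ hk
            exact_mod_cast Nat.le_of_lt hlt
          rw [this, smul_zero]
        · rw [hb h0, zero_smul]
      rw [h1, h2, h3, smul_zero, smul_zero]
      simp
  intro u hlen hsum
  have hex : ∃ d ∈ u, k < d.2 := by
    by_contra hcon
    push_neg at hcon
    have hle : (u.map Prod.snd).sum ≤ (u.map Prod.snd).length • k := by
      apply List.sum_le_card_nsmul
      intro x hx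
      obtain ⟨d, hd, rfl⟩ := List.mem_map.mp hx
      exact hcon d hd
    rw [List.length_map, hlen, nsmul_eq_mul] at hle
    exact absurd (lt_of_lt_of_le hsum hle) (lt_irrefl _)
  obtain ⟨d, hmem, hdk⟩ := hex
  obtain ⟨u₁, u₂, rfl⟩ := List.append_of_mem hmem
  exact move u₂ u₁ d hdk hlen hsum

lemma toWord (ρ : RamondRep P) (r : ℤ) (l : List (P →ₗ[ℂ] P))
    (hl : ∀ op ∈ l, (∃ m : ℤ, r < m ∧ op = ρ.L m) ∨ (∃ m : ℤ, r - 1 < m ∧ op = ρ.G m)) :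
    ∃ u : List (Bool × ℤ), u.length = l.length ∧ (∀ d ∈ u, r ≤ d.2) ∧
      ∀ x : P, l.foldr (fun op u => op u) x = act ρ u x := by
  induction l with
  | nil => exact ⟨[], rfl, by simp, fun x => rfl⟩
  | cons op l ih =>
    obtain ⟨u, hlen, hge, hact⟩ := ih (fun o ho => hl o (List.mem_cons_of_mem _ ho))
    rcases hl op List.mem_cons_self with ⟨m, hm, rfl⟩ | ⟨m, hm, rfl⟩
    · refine ⟨(true, m) :: u, by simp [hlen], ?_, fun x => ?_⟩
      · intro d hd
        rcases List.mem_cons.mp hd with rfl | hd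
        · exact le_of_lt hm
        · exact hge d hd
      · simp only [List.foldr_cons, hact, act_cons]; rfl
    · refine ⟨(false, m) :: u, by simp [hlen], ?_, fun x => ?_⟩
      · intro d hd
        rcases List.mem_cons.mp hd with rfl | hd
        · omega
        · exact hge d hd
      · simp only [List.foldr_cons, hact, act_cons]; rfl

lemma foldr_zero (l : List (P →ₗ[ℂ] P)) : l.foldr (fun op u => op u) (0 : P) = 0 := by
  induction l with
  | nil => rfl
  | cons op l ih => simp [ih]

lemma foldr_add (l : List (P →ₗ[ℂ] P)) (x y : P) :
    l.foldr (fun op u => op u) (x + y)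
      = l.foldr (fun op u => op u) x + l.foldr (fun op u => op u) y := by
  induction l with
  | nil => rfl
  | cons op l ih => simp [ih]

lemma foldr_smul (l : List (P →ₗ[ℂ] P)) (c : ℂ) (x : P) :
    l.foldr (fun op u => op u) (c • x) = c • l.foldr (fun op u => op u) x := by
  induction l with
  | nil => rfl
  | cons op l ih => simp [ih]

lemma act_homog (ρ : RamondRep P) (v : P) (hv : v ∈ ρ.ev ∨ v ∈ ρ.od) (u : List (Bool × ℤ)) :
    act ρ u v ∈ ρ.ev ∨ act ρ u v ∈ ρ.od := by
  induction u with
  | nil => exact hv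
  | cons d u ih =>
    rw [act_cons]
    cases hb : d.1
    · rcases ih with h | h
      · exact Or.inr (by simpa [opOf, hb] using ρ.hGev d.2 _ h)
      · exact Or.inl (by simpa [opOf, hb] using ρ.hGod d.2 _ h)
    · rcases ih with h | h
      · exact Or.inl (by simpa [opOf, hb] using ρ.hLev d.2 _ h)
      · exact Or.inr (by simpa [opOf, hb] using ρ.hLod d.2 _ h)

end RamondAux

open RamondAux

/-- let P be a simple restricted Ramond module. Then for any nonzero
v ∈ P and any sufficiently large r, P is a locally nilpotent module over
R^{(r)} = ⊕_{m>r} ℂL_m ⊕ ⊕_{m>r-1} ℂG_m: for every w ∈ P there is n such that every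
composite of at least n operators from R^{(r)} annihilates w. -/
theorem restricted_simple_locally_nilpotent
    (ρ : RamondRep P) (hsimple : ρ.IsSimple) (hres : ρ.IsRestricted) :
    ∀ v : P, v ≠ 0 → ∃ r₀ : ℤ, ∀ r : ℤ, r₀ ≤ r → ∀ w : P, ∃ n : ℕ,
      ∀ l : List (P →ₗ[ℂ] P),
        (∀ op ∈ l, (∃ m : ℤ, r < m ∧ op = ρ.L m) ∨ (∃ m : ℤ, r - 1 < m ∧ op = ρ.G m)) →
        n ≤ l.length →
        l.foldr (fun op u => op u) w = 0 := by
  classical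
  intro v hv
  obtain ⟨v', hv0, hvhom⟩ : ∃ v' : P, v' ≠ 0 ∧ (v' ∈ ρ.ev ∨ v' ∈ ρ.od) := by
    have hvtop : v ∈ ρ.ev ⊔ ρ.od := by
      rw [ρ.hcompl.sup_eq_top]; exact Submodule.mem_top
    obtain ⟨x, hx, y, hy, hxy⟩ := Submodule.mem_sup.mp hvtop
    by_cases hx0 : x = 0
    · refine ⟨y, ?_, Or.inr hy⟩
      intro h; apply hv; rw [← hxy, hx0, h, add_zero]
    · exact ⟨x, hx0, Or.inl hx⟩
  obtain ⟨k₀, hk₀⟩ := hres v'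
  set k : ℤ := max k₀ 0 with hkdef
  have hk : 0 ≤ k := le_max_right _ _
  have hvk : ∀ m : ℤ, k < m → ρ.L m v' = 0 ∧ ρ.G m v' = 0 := fun m hm =>
    hk₀ m (lt_of_le_of_lt (le_max_left _ _) hm)
  refine ⟨k + 1, fun r hr w => ?_⟩
  set S : Set P := {z | ∃ u : List (Bool × ℤ), act ρ u v' = z} with hS
  have hinv : ρ.Invariant (Submodule.span ℂ S) := by
    constructor
    · intro m z hz
      induction hz using Submodule.span_induction with
      | mem x hx =>
        obtain ⟨u, rfl⟩ := hx
        exact Submodule.subset_span ⟨(true, m) :: u, rfl⟩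
      | zero => rw [map_zero]; exact Submodule.zero_mem _
      | add x y hx hy ihx ihy => rw [map_add]; exact Submodule.add_mem _ ihx ihy
      | smul c x hx ihx => rw [map_smul]; exact Submodule.smul_mem _ _ ihx
    · intro m z hz
      induction hz using Submodule.span_induction with
      | mem x hx =>
        obtain ⟨u, rfl⟩ := hx
        exact Submodule.subset_span ⟨(false, m) :: u, rfl⟩
      | zero => rw [map_zero]; exact Submodule.zero_mem _
      | add x y hx hy ihx ihy => rw [map_add]; exact Submodule.add_mem _ ihx ihy
      | smul c x hx ihx => rw [map_smul]; exact Submodule.smul_mem _ _ ihx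
  have hgr : ρ.Graded (Submodule.span ℂ S) := by
    apply le_antisymm
    · rw [Submodule.span_le]
      rintro z ⟨u, rfl⟩
      rcases act_homog ρ v' hvhom u with h | h
      · exact Submodule.mem_sup_left
          (Submodule.mem_inf.mpr ⟨Submodule.subset_span ⟨u, rfl⟩, h⟩)
      · exact Submodule.mem_sup_right
          (Submodule.mem_inf.mpr ⟨Submodule.subset_span ⟨u, rfl⟩, h⟩)
    · exact sup_le inf_le_left inf_le_left
  have hne : Submodule.span ℂ S ≠ ⊥ := by
    intro hbot
    apply hv0
    have hmem : v' ∈ Submodule.span ℂ S := Submodule.subset_span ⟨[], rfl⟩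
    rwa [hbot, Submodule.mem_bot] at hmem
  have htop := (hsimple.2 _ hinv hgr).resolve_left hne
  have hw : w ∈ Submodule.span ℂ S := htop ▸ Submodule.mem_top
  induction hw using Submodule.span_induction with
  | mem z hz =>
    obtain ⟨u, rfl⟩ := hz
    refine ⟨((u.length : ℤ) * k - (u.map Prod.snd).sum).toNat + 1, fun l hl hlen => ?_⟩
    obtain ⟨u', hulen, huge, hact⟩ := toWord ρ r l hl
    rw [hact, ← act_append]
    apply claimA ρ v' k hk hvk (u' ++ u).length _ rfl
    have hB : (u'.length : ℤ) * r ≤ (u'.map Prod.snd).sum := by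
      have h := List.card_nsmul_le_sum (u'.map Prod.snd) r ?_
      · rwa [List.length_map, nsmul_eq_mul] at h
      · intro x hx
        obtain ⟨d, hd, rfl⟩ := List.mem_map.mp hx
        exact huge d hd
    have h2 : (u'.length : ℤ) * (k + 1) ≤ (u'.length : ℤ) * r :=
      mul_le_mul_of_nonneg_left hr (Nat.cast_nonneg _)
    have h3 : (u.length : ℤ) * k - (u.map Prod.snd).sum < (u'.length : ℤ) := by
      have hle := Int.self_le_toNat ((u.length : ℤ) * k - (u.map Prod.snd).sum)
      have hlt : (((u.length : ℤ) * k - (u.map Prod.snd).sum).toNat : ℤ)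
          < (u'.length : ℤ) := by
        rw [← hulen] at hlen
        exact_mod_cast hlen
      exact lt_of_le_of_lt hle hlt
    rw [List.length_append, List.map_append, List.sum_append]
    push_cast
    nlinarith [hB, h2, h3]
  | zero => exact ⟨0, fun l _ _ => foldr_zero l⟩
  | add x y hx hy ihx ihy =>
    obtain ⟨n1, h1⟩ := ihx
    obtain ⟨n2, h2⟩ := ihy
    refine ⟨max n1 n2, fun l hl hlen => ?_⟩
    rw [foldr_add, h1 l hl (le_trans (le_max_left _ _) hlen),
      h2 l hl (le_trans (le_max_right _ _) hlen), add_zero]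
  | smul c x hx ihx =>
    obtain ⟨n1, h1⟩ := ihx
    refine ⟨n1, fun l hl hlen => ?_⟩
    rw [foldr_smul, h1 l hl hlen, smul_zero]
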